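/- Let τ < τ', ν ≥ 1, and let x, y : [τ,τ'] → ℝ be Lipschitz functions with x(t) ≤ y(t) for all t, satisfying |y(τ') - x(τ')| ≤ |y(τ) - x(τ)| + C₁(τ' - τ)·2^{-ν} for some constant C₁ > 0. Suppose in addition that x(τ') - x(τ) ≥ λ_min (τ' - τ) for some λ_min > 0, and that (with ρ' := λ_min/(6C₁)) the discrete Oleinik condition 2^{-ν}/(y(τ') - x(τ')) ≤ 5ρ'/(x(τ') - a) holds together with x(τ') - a ≥ λ_min(τ'-τ) (fronts travel at speed at least λ_min). Then y(τ) - x(τ) ≥ (1 - 5C₁ρ'/λ_min)·(y(τ') - x(τ')) > 0, i.e. x(τ) < y(τ) whenever y(τ') > x(τ'). -/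
import Mathlib


open Filter Topology Set

theorem stmt_7 (a τ τ' C₁ lammin : ℝ) (ν : ℕ) (x y : ℝ → ℝ)
    (hττ : τ < τ') (hC₁ : 0 < C₁) (hlam : 0 < lammin) (hν : 1 ≤ ν)
    (hlipx : ∃ L : NNReal, LipschitzOnWith L x (Set.Icc τ τ'))
    (hlipy : ∃ L : NNReal, LipschitzOnWith L y (Set.Icc τ τ'))
    (hord : ∀ t ∈ Set.Icc τ τ', x t ≤ y t)
    (hgrow : |y τ' - x τ'| ≤ |y τ - x τ| + C₁ * (τ' - τ) * (2 : ℝ) ^ (-(ν : ℤ)))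
    (hspeed : lammin * (τ' - τ) ≤ x τ' - x τ)
    (hpos : x τ' < y τ')
    (holeinik : (2 : ℝ) ^ (-(ν : ℤ)) / (y τ' - x τ') ≤
      5 * (lammin / (6 * C₁)) / (x τ' - a))
    (hdist : lammin * (τ' - τ) ≤ x τ' - a) :
    y τ - x τ ≥ (1 - 5 * C₁ * (lammin / (6 * C₁)) / lammin) * (y τ' - x τ') ∧
      x τ < y τ := by
  have hτmem : τ ∈ Set.Icc τ τ' := ⟨le_refl τ, hττ.le⟩
  have hxy : x τ ≤ y τ := hord τ hτmem
  have hD : 0 < y τ' - x τ' := sub_pos.mpr hpos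
  have hE : 0 < x τ' - a :=
    lt_of_lt_of_le (mul_pos hlam (sub_pos.mpr hττ)) hdist
  have ht : 0 < (2 : ℝ) ^ (-(ν : ℤ)) := by positivity
  have h1 : (2 : ℝ) ^ (-(ν : ℤ)) * (x τ' - a) ≤
      5 * (lammin / (6 * C₁)) * (y τ' - x τ') := (div_le_div_iff₀ hD hE).mp holeinik
  have hg : y τ' - x τ' ≤ (y τ - x τ) + C₁ * (τ' - τ) * (2 : ℝ) ^ (-(ν : ℤ)) := by
    rwa [abs_of_pos hD, abs_of_nonneg (sub_nonneg.mpr hxy)] at hgrow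
  have hcoef : 1 - 5 * C₁ * (lammin / (6 * C₁)) / lammin = 1 / 6 := by
    field_simp; ring
  rw [hcoef]
  -- key: C₁ (τ'-τ) t ≤ (5/6) D
  have hkey : C₁ * (τ' - τ) * (2 : ℝ) ^ (-(ν : ℤ)) ≤ 5 / 6 * (y τ' - x τ') := by
    have h2 : (2 : ℝ) ^ (-(ν : ℤ)) * (lammin * (τ' - τ)) ≤
        5 * (lammin / (6 * C₁)) * (y τ' - x τ') :=
      le_trans (by nlinarith) h1
    have h2' : (2 : ℝ) ^ (-(ν : ℤ)) * (lammin * (τ' - τ)) * (6 * C₁) ≤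
        5 * lammin * (y τ' - x τ') := by
      have := mul_le_mul_of_nonneg_right h2 (by positivity : (0:ℝ) ≤ 6 * C₁)
      calc (2 : ℝ) ^ (-(ν : ℤ)) * (lammin * (τ' - τ)) * (6 * C₁)
          ≤ 5 * (lammin / (6 * C₁)) * (y τ' - x τ') * (6 * C₁) := this
        _ = 5 * lammin * (y τ' - x τ') := by field_simp
    nlinarith [h2', hlam]
  constructor
  · nlinarith
  · nlinarith
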